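/- Let A, B, Z_{i−1}, Zᵢ, Z_{i+1}, Z_{j−1}, Z_j, Z_{j+1} ∈ ℂ⁴ satisfy the unitarity-cut conditions ⟨A B Zᵢ Z_{i+1}⟩ = 0 and ⟨A B Z_j Z_{j+1}⟩ = 0. Then ⟨Zᵢ Z_{i+1} Z_j Z_{j+1}⟩ · ⟨A B Z_{i−1} Zᵢ⟩ · ⟨A B Z_{j−1} Z_j⟩ = −⟨A B Zᵢ Z_j⟩ · ⟨A B (Z_{i−1} Zᵢ Z_{i+1})∩(Z_{j−1} Z_j Z_{j+1})⟩. -/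

import Mathlib

/-- Four-bracket: determinant of the 4×4 matrix whose columns are `a b c d`. -/
noncomputable def brk4 (a b c d : Fin 4 → ℂ) : ℂ :=
  Matrix.det (Matrix.of fun i j => ![a, b, c, d] j i)

/-- `⟨X Y (p q r)∩(s t u)⟩`: contraction of `X∧Y` with the bivector
representing the intersection line of the planes `(p q r)` and `(s t u)`. -/
noncomputable def interBrk (X Y p q r s t u : Fin 4 → ℂ) : ℂ :=
  brk4 X Y p q * brk4 r s t u + brk4 X Y q r * brk4 p s t u +
    brk4 X Y r p * brk4 q s t u

/-- Explicit expansion of the four-bracket. -/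
lemma brk4_expand (a b c d : Fin 4 → ℂ) : brk4 a b c d =
    a 0 * (b 1 * (c 2 * d 3 - c 3 * d 2) - b 2 * (c 1 * d 3 - c 3 * d 1) + b 3 * (c 1 * d 2 - c 2 * d 1))
  - a 1 * (b 0 * (c 2 * d 3 - c 3 * d 2) - b 2 * (c 0 * d 3 - c 3 * d 0) + b 3 * (c 0 * d 2 - c 2 * d 0))
  + a 2 * (b 0 * (c 1 * d 3 - c 3 * d 1) - b 1 * (c 0 * d 3 - c 3 * d 0) + b 3 * (c 0 * d 1 - c 1 * d 0))
  - a 3 * (b 0 * (c 1 * d 2 - c 2 * d 1) - b 1 * (c 0 * d 2 - c 2 * d 0) + b 2 * (c 0 * d 1 - c 1 * d 0)) := by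
  simp [brk4, Matrix.det_succ_row_zero, Fin.sum_univ_succ, Fin.succAbove_of_castSucc_lt,
    Fin.succAbove_of_le_castSucc]
  ring

/-- Antisymmetry in the last two slots. -/
lemma brk4_swap34 (X Y a b : Fin 4 → ℂ) : brk4 X Y a b = -brk4 X Y b a := by
  rw [brk4_expand, brk4_expand]; ring

/-- A five-term (Schouten/Plücker) identity. -/
lemma schouten (A B Zi Zi1 Zjm Zj Zj1 : Fin 4 → ℂ) :
    brk4 A B Zi Zj * brk4 Zi1 Zjm Zj Zj1 =
      brk4 A B Zi1 Zj * brk4 Zi Zjm Zj Zj1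
      - brk4 A B Zjm Zj * brk4 Zi Zi1 Zj Zj1
      - brk4 A B Zj Zj1 * brk4 Zi1 Zjm Zj Zi := by
  rw [brk4_expand A B Zi Zj, brk4_expand Zi1 Zjm Zj Zj1, brk4_expand A B Zi1 Zj,
    brk4_expand Zi Zjm Zj Zj1, brk4_expand A B Zjm Zj, brk4_expand Zi Zi1 Zj Zj1,
    brk4_expand A B Zj Zj1, brk4_expand Zi1 Zjm Zj Zi]
  ring

/-- The rank-two Plücker identity for the skew form `⟨A B · ·⟩`. -/
lemma plucker_rank2 (A B a b c d : Fin 4 → ℂ) :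
    brk4 A B a b * brk4 A B c d - brk4 A B a c * brk4 A B b d
      + brk4 A B a d * brk4 A B b c = 0 := by
  rw [brk4_expand A B a b, brk4_expand A B c d, brk4_expand A B a c,
    brk4_expand A B b d, brk4_expand A B a d, brk4_expand A B b c]
  ring

/-- Under the unitarity-cut conditions, the pole `⟨A B i j⟩` converts into the
intersection numerator `−⟨A B (i−1 i i+1)∩(j−1 j j+1)⟩`. -/
theorem pole_ij_intersection_form (A B Zim Zi Zi1 Zjm Zj Zj1 : Fin 4 → ℂ)
    (hcut1 : brk4 A B Zi Zi1 = 0) (hcut2 : brk4 A B Zj Zj1 = 0) :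
    brk4 Zi Zi1 Zj Zj1 * brk4 A B Zim Zi * brk4 A B Zjm Zj =
      -(brk4 A B Zi Zj * interBrk A B Zim Zi Zi1 Zjm Zj Zj1) := by
  have L1 := schouten A B Zi Zi1 Zjm Zj Zj1
  have L2 := plucker_rank2 A B Zim Zi Zi1 Zj
  have L3 := brk4_swap34 A B Zi1 Zim
  rw [interBrk]
  linear_combination (brk4 A B Zim Zi) * L1 + (brk4 Zi Zjm Zj Zj1) * L2
    + (brk4 A B Zi Zj * brk4 Zi Zjm Zj Zj1) * L3
    + (brk4 A B Zi Zj * brk4 Zim Zjm Zj Zj1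
        - brk4 A B Zim Zj * brk4 Zi Zjm Zj Zj1) * hcut1
    + (- brk4 A B Zim Zi * brk4 Zi1 Zjm Zj Zi) * hcut2
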